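/- Let ρ be a real root of ρ^3 - ρ^2 - 2ρ + 1 = 0 (all such roots satisfy |ρ| < 2), let S n = (9 + 23*(-1)^n + 2^(2+n) - 6*n*(-1)^n)/36 and V n = (2^(2+n) + (-1)^(1+n) + 9)/6. Then for each fixed m, the limit as n → ∞ of (1/(V n - 2)) * ∑_{k=m+1}^{n} S (n-k) * ρ^k equals (1/6) * ρ^2 * (ρ+1) * (ρ/2)^m. -/

import Mathlib

open Filter Finset Topology

theorem stmt_5 (ρ : ℝ) (hρ : ρ ^ 3 - ρ ^ 2 - 2 * ρ + 1 = 0) (S V : ℕ → ℝ)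
    (hS : ∀ n : ℕ, S n = (9 + 23 * (-1 : ℝ) ^ n + 2 ^ (2 + n) - 6 * n * (-1 : ℝ) ^ n) / 36)
    (hV : ∀ n : ℕ, V n = (2 ^ (2 + n) + (-1 : ℝ) ^ (1 + n) + 9) / 6)
    (m : ℕ) :
    Filter.Tendsto
      (fun n : ℕ => (1 / (V n - 2)) * ∑ k ∈ Finset.Icc (m + 1) n, S (n - k) * ρ ^ k)
      Filter.atTop
      (nhds ((1 / 6) * ρ ^ 2 * (ρ + 1) * (ρ / 2) ^ m)) := by
  have hρlt : ρ < 2 := by nlinarith [sq_nonneg (ρ - 1), sq_nonneg ρ]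
  have hρgt : -2 < ρ := by nlinarith [sq_nonneg ρ, sq_nonneg (ρ + 1)]
  set x : ℝ := ρ / 2 with hxdef
  have hx : |x| < 1 := by rw [abs_lt]; constructor <;> [linarith; linarith]
  have hxne1 : x ≠ 1 := by intro h; rw [h] at hx; norm_num at hx
  have h1x : (1 : ℝ) - x ≠ 0 := by intro h; apply hxne1; linarith
  have h2n : ∀ n : ℕ, (2 : ℝ) ^ n ≠ 0 := fun n => pow_ne_zero n two_ne_zero
  set M : ℝ := max 1 |ρ| with hMdef
  have hM1 : (1 : ℝ) ≤ M := le_max_left _ _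
  have hM2 : M < 2 := max_lt one_lt_two (abs_lt.2 ⟨hρgt, hρlt⟩)
  set T : ℕ → ℝ := fun n => ∑ k ∈ Finset.Icc (m + 1) n, S (n - k) * ρ ^ k with hTdef
  set c : ℕ → ℕ → ℝ := fun n k =>
    (9 + 23 * (-1 : ℝ) ^ (n - k) - 6 * (n - k : ℕ) * (-1 : ℝ) ^ (n - k)) * ρ ^ k / 36 with hcdef
  set A : ℕ → ℝ := fun n => ∑ k ∈ Finset.Icc (m + 1) n, x ^ k with hAdef
  set E : ℕ → ℝ := fun n => (∑ k ∈ Finset.Icc (m + 1) n, c n k) / 2 ^ n with hEdef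
  -- split
  have hsplit : ∀ n : ℕ, T n / 2 ^ n = (1 / 9) * A n + E n := by
    intro n
    have hterm : ∀ k ∈ Finset.Icc (m + 1) n,
        S (n - k) * ρ ^ k = (2 : ℝ) ^ n / 9 * x ^ k + c n k := by
      intro k hk
      have hkn : k ≤ n := (Finset.mem_Icc.1 hk).2
      have h2 : (2 : ℝ) ^ (n - k) = 2 ^ n / 2 ^ k := by
        rw [eq_div_iff (h2n k), ← pow_add, Nat.sub_add_cancel hkn]
      rw [hS, hxdef, pow_add 2 2 (n - k), h2, hcdef, div_pow]
      field_simp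
      ring
    rw [hTdef]
    simp only
    rw [Finset.sum_congr rfl hterm, Finset.sum_add_distrib, add_div, hEdef, hAdef]
    congr 1
    rw [← Finset.mul_sum, div_eq_iff (h2n n)]
    ring
  -- E → 0
  have hEbound : ∀ n : ℕ, ‖E n‖ ≤ ((n : ℝ) + 1) ^ 2 * (M / 2) ^ n := by
    intro n
    have hc : ∀ k ∈ Finset.range (n + 1), |c n k| ≤ ((n : ℝ) + 1) * M ^ n := by
      intro k hk
      have hkn : k ≤ n := Nat.lt_succ_iff.1 (Finset.mem_range.1 hk)
      have h1 : |(9 + 23 * (-1 : ℝ) ^ (n - k) - 6 * (n - k : ℕ) * (-1 : ℝ) ^ (n - k))| ≤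
          36 * ((n : ℝ) + 1) := by
        have hnk : ((n - k : ℕ) : ℝ) ≤ (n : ℝ) := by exact_mod_cast Nat.sub_le n k
        have hnk0 : (0 : ℝ) ≤ ((n - k : ℕ) : ℝ) := Nat.cast_nonneg _
        rcases Nat.even_or_odd (n - k) with he | ho
        · rw [he.neg_one_pow]
          rw [abs_le]; constructor <;> nlinarith
        · rw [ho.neg_one_pow]
          rw [abs_le]; constructor <;> nlinarith
      have h2 : |ρ| ^ k ≤ M ^ n := by
        calc |ρ| ^ k ≤ M ^ k := pow_le_pow_left₀ (abs_nonneg ρ) (le_max_right 1 |ρ|) k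
          _ ≤ M ^ n := pow_le_pow_right₀ hM1 hkn
      have : |c n k| = |(9 + 23 * (-1 : ℝ) ^ (n - k) - 6 * (n - k : ℕ) * (-1 : ℝ) ^ (n - k))|
          * |ρ| ^ k / 36 := by
        rw [hcdef]; simp only [abs_div, abs_mul, abs_pow]; norm_num
      rw [this]
      calc |(9 + 23 * (-1 : ℝ) ^ (n - k) - 6 * (n - k : ℕ) * (-1 : ℝ) ^ (n - k))| * |ρ| ^ k / 36
          ≤ (36 * ((n : ℝ) + 1)) * M ^ n / 36 := by
            apply div_le_div_of_nonneg_right ?_ (by norm_num)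
            · exact mul_le_mul h1 h2 (pow_nonneg (abs_nonneg ρ) k) (by positivity)
        _ = ((n : ℝ) + 1) * M ^ n := by ring
    have hsum : |∑ k ∈ Finset.Icc (m + 1) n, c n k| ≤ ((n : ℝ) + 1) * (((n : ℝ) + 1) * M ^ n) := by
      calc |∑ k ∈ Finset.Icc (m + 1) n, c n k| ≤ ∑ k ∈ Finset.Icc (m + 1) n, |c n k| :=
            Finset.abs_sum_le_sum_abs _ _
        _ ≤ ∑ k ∈ Finset.range (n + 1), |c n k| := by
            apply Finset.sum_le_sum_of_subset_of_nonneg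
            · intro k hk
              exact Finset.mem_range.2 (Nat.lt_succ_of_le (Finset.mem_Icc.1 hk).2)
            · intro k _ _; exact abs_nonneg _
        _ ≤ ∑ k ∈ Finset.range (n + 1), ((n : ℝ) + 1) * M ^ n := Finset.sum_le_sum hc
        _ = ((n : ℝ) + 1) * (((n : ℝ) + 1) * M ^ n) := by
            rw [Finset.sum_const, Finset.card_range]; push_cast; ring
    have h2npos : (0 : ℝ) < 2 ^ n := by positivity
    rw [hEdef]
    simp only [Real.norm_eq_abs, abs_div, abs_of_pos h2npos]
    rw [div_le_iff₀ h2npos]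
    calc |∑ k ∈ Finset.Icc (m + 1) n, c n k| ≤ ((n : ℝ) + 1) * (((n : ℝ) + 1) * M ^ n) := hsum
      _ = ((n : ℝ) + 1) ^ 2 * (M / 2) ^ n * 2 ^ n := by
          rw [div_pow]; field_simp
  have hr : |M / 2| < 1 := by
    rw [abs_of_pos (by positivity)]; linarith
  have hrne : M / 2 ≠ 0 := by positivity
  have hbound : Tendsto (fun n : ℕ => ((n : ℝ) + 1) ^ 2 * (M / 2) ^ n) atTop (𝓝 0) := by
    have h := (tendsto_pow_const_mul_const_pow_of_abs_lt_one 2 hr).comp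
      (tendsto_add_atTop_nat 1)
    have h2 := h.const_mul ((M / 2)⁻¹)
    rw [mul_zero] at h2
    apply h2.congr
    intro n
    simp only [Function.comp]
    push_cast
    rw [pow_succ]
    field_simp
    ring
  have hE0 : Tendsto E atTop (𝓝 0) := squeeze_zero_norm hEbound hbound
  -- A tendsto
  have hA : Tendsto A atTop (𝓝 (x ^ (m + 1) / (1 - x))) := by
    have hgeom : HasSum (fun k : ℕ => x ^ k) (1 - x)⁻¹ := hasSum_geometric_of_abs_lt_one hx
    have h1 : Tendsto (fun n : ℕ => ∑ k ∈ Finset.range n, x ^ k) atTop (𝓝 (1 - x)⁻¹) :=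
      hgeom.tendsto_sum_nat
    have h2 := (h1.comp (tendsto_add_atTop_nat 1)).sub_const (∑ k ∈ Finset.range (m + 1), x ^ k)
    have heq : (fun n : ℕ => (∑ k ∈ Finset.range (n + 1), x ^ k) - ∑ k ∈ Finset.range (m + 1), x ^ k)
        =ᶠ[atTop] A := by
      filter_upwards [eventually_ge_atTop m] with n hn
      rw [hAdef]
      simp only
      rw [← Finset.Ico_add_one_right_eq_Icc, Finset.sum_Ico_eq_sub _ (m := m + 1) (n := n + 1) (Nat.succ_le_succ hn)]
    have hval : (1 - x)⁻¹ - ∑ k ∈ Finset.range (m + 1), x ^ k = x ^ (m + 1) / (1 - x) := by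
      rw [geom_sum_eq hxne1]
      have hx1 : x - 1 ≠ 0 := sub_ne_zero.2 hxne1
      field_simp
      ring
    rw [← hval]
    exact h2.congr' heq
  -- u tendsto
  have hu : Tendsto (fun n => T n / 2 ^ n) atTop (𝓝 ((1 / 9) * (x ^ (m + 1) / (1 - x)) + 0)) := by
    apply Tendsto.congr (fun n => (hsplit n).symm)
    exact (hA.const_mul (1 / 9)).add hE0
  -- v tendsto
  have hv : Tendsto (fun n : ℕ => (V n - 2) / 2 ^ n) atTop (𝓝 (2 / 3)) := by
    have h1 : Tendsto (fun n : ℕ => (-1 / 2 : ℝ) ^ n) atTop (𝓝 0) :=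
      tendsto_pow_atTop_nhds_zero_of_abs_lt_one (by rw [abs_lt]; norm_num)
    have h2 : Tendsto (fun n : ℕ => ((1 : ℝ) / 2) ^ n) atTop (𝓝 0) :=
      tendsto_pow_atTop_nhds_zero_of_abs_lt_one (by rw [abs_lt]; norm_num)
    have h3 := ((tendsto_const_nhds : Tendsto (fun _ : ℕ => (2/3 : ℝ)) atTop (𝓝 (2/3))).sub
      (h1.const_mul (1/6))).sub (h2.const_mul (1/2))
    rw [mul_zero, mul_zero, sub_zero, sub_zero] at h3
    apply h3.congr
    intro n
    rw [hV]
    rw [pow_add 2 2 n, pow_add (-1 : ℝ) 1 n, pow_one, div_pow, div_pow, one_pow]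
    have h := h2n n
    field_simp
    ring
  -- combine
  have hdiv := hu.div hv (by norm_num : (2 : ℝ) / 3 ≠ 0)
  have hfeq : ∀ n : ℕ, (T n / 2 ^ n) / ((V n - 2) / 2 ^ n)
      = (1 / (V n - 2)) * ∑ k ∈ Finset.Icc (m + 1) n, S (n - k) * ρ ^ k := by
    intro n
    rw [one_div, inv_mul_eq_div]
    rcases eq_or_ne (V n - 2) 0 with h | h
    · rw [h]; simp
    · rw [div_div_div_cancel_right₀]
      exact h2n n
  have hval2 : ((1 / 9) * (x ^ (m + 1) / (1 - x)) + 0) / (2 / 3)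
      = (1 / 6) * ρ ^ 2 * (ρ + 1) * (ρ / 2) ^ m := by
    have h2ρ : (2:ℝ) - ρ ≠ 0 := sub_ne_zero.2 (ne_of_gt hρlt)
    rw [add_zero, hxdef, pow_succ]
    field_simp
    ring_nf
    linear_combination (18 * ρ * ρ ^ m * (1 / 2) ^ m) * hρ
  rw [← hval2]
  exact hdiv.congr hfeq
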